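/- arXiv:2109.02182 — 4 statements merged into one kernel-verified Lean document; each statement's English description precedes it below -/
import Mathlib

section
/- With the same setup of a full-rank QR factorization J = QR (R₁μ invertible), given a residual vector r and r' = Qᵀr partitioned as (r₁', r₂'), the reduced gradient satisfies b_κ − H_{κμ}H_{μμ}⁻¹b_μ = R₂κᵀr₂', where b_μ = J_μᵀr and b_κ = J_κᵀr. -/
open Matrix

theorem stmt_3 {N nμ nκ m : ℕ}
    (Jμ : Matrix (Fin N) (Fin nμ) ℝ) (Jκ : Matrix (Fin N) (Fin nκ) ℝ)
    (Q₁ : Matrix (Fin N) (Fin nμ) ℝ) (Q₂ : Matrix (Fin N) (Fin m) ℝ)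
    -- Q = (Q₁ Q₂) is orthogonal
    (hQ1 : Q₁ᵀ * Q₁ = 1) (hQ2 : Q₂ᵀ * Q₂ = 1) (hQ12 : Q₁ᵀ * Q₂ = 0)
    (hQfull : Q₁ * Q₁ᵀ + Q₂ * Q₂ᵀ = 1)
    (R₁μ : Matrix (Fin nμ) (Fin nμ) ℝ) (R₁κ : Matrix (Fin nμ) (Fin nκ) ℝ)
    (R₂κ : Matrix (Fin m) (Fin nκ) ℝ)
    -- QᵀJ = [[R₁μ, R₁κ],[0, R₂κ]]
    (hR1μ : Q₁ᵀ * Jμ = R₁μ) (hR1κ : Q₁ᵀ * Jκ = R₁κ)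
    (hR0 : Q₂ᵀ * Jμ = 0) (hR2κ : Q₂ᵀ * Jκ = R₂κ)
    (hInv : Invertible R₁μ)
    (r : Fin N → ℝ) :
    Jκᵀ *ᵥ r - (Jκᵀ * Jμ) *ᵥ ((Jμᵀ * Jμ)⁻¹ *ᵥ (Jμᵀ *ᵥ r)) =
      R₂κᵀ *ᵥ (Q₂ᵀ *ᵥ r) := by
  have hJμ : Jμ = Q₁ * R₁μ := by
    calc Jμ = (Q₁ * Q₁ᵀ + Q₂ * Q₂ᵀ) * Jμ := by rw [hQfull, Matrix.one_mul]
    _ = Q₁ * (Q₁ᵀ * Jμ) + Q₂ * (Q₂ᵀ * Jμ) := by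
        rw [Matrix.add_mul, Matrix.mul_assoc, Matrix.mul_assoc]
    _ = Q₁ * R₁μ := by rw [hR1μ, hR0, Matrix.mul_zero, add_zero]
  have hJκ : Jκ = Q₁ * R₁κ + Q₂ * R₂κ := by
    calc Jκ = (Q₁ * Q₁ᵀ + Q₂ * Q₂ᵀ) * Jκ := by rw [hQfull, Matrix.one_mul]
    _ = Q₁ * (Q₁ᵀ * Jκ) + Q₂ * (Q₂ᵀ * Jκ) := by
        rw [Matrix.add_mul, Matrix.mul_assoc, Matrix.mul_assoc]
    _ = _ := by rw [hR1κ, hR2κ]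
  have hRT : Invertible R₁μᵀ := Matrix.invertibleTranspose R₁μ
  have hH : Jμᵀ * Jμ = R₁μᵀ * R₁μ := by
    rw [hJμ, Matrix.transpose_mul, Matrix.mul_assoc,
      ← Matrix.mul_assoc Q₁ᵀ, hQ1, Matrix.one_mul]
  have hHinv : Invertible (Jμᵀ * Jμ) := by rw [hH]; exact hRT.mul hInv
  have hHinv' : (Jμᵀ * Jμ)⁻¹ = R₁μ⁻¹ * R₁μᵀ⁻¹ := by
    rw [hH, Matrix.mul_inv_rev]
  have hkey : Jκᵀ - (Jκᵀ * Jμ) * ((Jμᵀ * Jμ)⁻¹ * Jμᵀ) = R₂κᵀ * Q₂ᵀ := by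
    have h21 : Q₂ᵀ * Q₁ = 0 := by
      have := congrArg Matrix.transpose hQ12
      simpa [Matrix.transpose_mul] using this
    have hJκμ : Jκᵀ * Jμ = R₁κᵀ * R₁μ := by
      rw [hJκ, hJμ, Matrix.transpose_add, Matrix.transpose_mul,
        Matrix.transpose_mul, Matrix.add_mul, Matrix.mul_assoc,
        Matrix.mul_assoc, ← Matrix.mul_assoc Q₁ᵀ, ← Matrix.mul_assoc Q₂ᵀ,
        hQ1, h21, Matrix.one_mul, Matrix.zero_mul, Matrix.mul_zero, add_zero]
    rw [hJκμ, hHinv', hJμ, Matrix.transpose_mul]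
    have h1 : R₁κᵀ * R₁μ * (R₁μ⁻¹ * R₁μᵀ⁻¹ * (R₁μᵀ * Q₁ᵀ)) = R₁κᵀ * Q₁ᵀ := by
      rw [Matrix.mul_assoc R₁μ⁻¹, ← Matrix.mul_assoc R₁μᵀ⁻¹,
        Matrix.inv_mul_of_invertible, Matrix.one_mul,
        Matrix.mul_assoc R₁κᵀ, ← Matrix.mul_assoc R₁μ,
        Matrix.mul_inv_of_invertible, Matrix.one_mul]
    rw [h1, hJκ, Matrix.transpose_add, Matrix.transpose_mul,
      Matrix.transpose_mul]
    abel
  have := congrArg (· *ᵥ r) hkey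
  simpa [sub_mulVec, mulVec_mulVec] using this
end

section
/- Let Q = (Q₁ Q₂) be orthogonal with Q₁ ∈ ℝ^{N×r_μ} such that Q₂ᵀJ_μ = 0 and col(Q₁) = col(J_μ), where r_μ = rank(J_μ). Then the generalized (pseudo-inverse) Schur complement satisfies H_{κκ} − H_{κμ}H_{μμ}⁺H_{μκ} = (Q₂ᵀJ_κ)ᵀ(Q₂ᵀJ_κ). -/
open Matrix

/-- The four Penrose conditions characterizing the Moore–Penrose pseudo-inverse. -/
def IsMoorePenrose {m n : Type*} [Fintype m] [Fintype n]
    (A : Matrix m n ℝ) (P : Matrix n m ℝ) : Prop :=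
  A * P * A = A ∧ P * A * P = P ∧ (A * P)ᵀ = A * P ∧ (P * A)ᵀ = P * A

lemma transpose_mul_self_eq_zero' {a b : ℕ} {A : Matrix (Fin a) (Fin b) ℝ}
    (h : Aᵀ * A = 0) : A = 0 := by
  ext i j
  have hd := congrFun (congrFun h j) j
  simp only [Matrix.mul_apply, Matrix.transpose_apply, Matrix.zero_apply] at hd
  have := (Finset.sum_eq_zero_iff_of_nonneg (fun k _ => mul_self_nonneg (A k j))).mp hd
  have hz := this i (Finset.mem_univ i)
  have := mul_self_eq_zero.mp hz
  simpa using this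

theorem stmt_5 {N nμ nκ rμ m : ℕ}
    (Jμ : Matrix (Fin N) (Fin nμ) ℝ) (Jκ : Matrix (Fin N) (Fin nκ) ℝ)
    (hrank : Jμ.rank = rμ)
    (Q₁ : Matrix (Fin N) (Fin rμ) ℝ) (Q₂ : Matrix (Fin N) (Fin m) ℝ)
    -- Q = (Q₁ Q₂) orthogonal
    (hQ1 : Q₁ᵀ * Q₁ = 1) (hQ2 : Q₂ᵀ * Q₂ = 1) (hQ12 : Q₁ᵀ * Q₂ = 0)
    (hQfull : Q₁ * Q₁ᵀ + Q₂ * Q₂ᵀ = 1)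
    (hQ2Jμ : Q₂ᵀ * Jμ = 0)
    (hspan : LinearMap.range Q₁.mulVecLin = LinearMap.range Jμ.mulVecLin)
    -- P is the Moore–Penrose pseudo-inverse of H_{μμ} = JμᵀJμ
    (P : Matrix (Fin nμ) (Fin nμ) ℝ) (hP : IsMoorePenrose (Jμᵀ * Jμ) P) :
    Jκᵀ * Jκ - Jκᵀ * Jμ * P * (Jμᵀ * Jκ) = (Q₂ᵀ * Jκ)ᵀ * (Q₂ᵀ * Jκ) := by
  obtain ⟨h1, h2, h3, h4⟩ := hP
  set A : Matrix (Fin nμ) (Fin nμ) ℝ := Jμᵀ * Jμ with hA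
  have hAT : Aᵀ = A := by rw [hA, Matrix.transpose_mul, Matrix.transpose_transpose]
  -- A * Pᵀ = P * A
  have hAPt : A * Pᵀ = P * A := by
    have := h4
    rw [Matrix.transpose_mul, hAT] at this
    exact this
  -- Jμ * P * A = Jμ
  have hJPA : Jμ * P * A = Jμ := by
    have key : (Jμ * (P * A) - Jμ)ᵀ * (Jμ * (P * A) - Jμ) = 0 := by
      have ht : (Jμ * (P * A) - Jμ)ᵀ = P * A * Jμᵀ - Jμᵀ := by
        rw [Matrix.transpose_sub, Matrix.transpose_mul, h4]
      rw [ht]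
      have e1 : (P * A * Jμᵀ - Jμᵀ) * (Jμ * (P * A) - Jμ)
          = P * A * A * (P * A) - P * A * A - A * (P * A) + A := by
        simp only [Matrix.sub_mul, Matrix.mul_sub, Matrix.mul_assoc, hA]
        abel
      rw [e1]
      have hAPA : A * (P * A) = A := by rw [← Matrix.mul_assoc]; exact h1
      have h5 : P * A * A * (P * A) = P * A * A := by
        rw [Matrix.mul_assoc (P * A), hAPA]
      rw [h5, hAPA]
      abel
    have := transpose_mul_self_eq_zero' key
    have := sub_eq_zero.mp this
    rw [← Matrix.mul_assoc] at this
    exact this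
  -- P * A * Jμᵀ = Jμᵀ
  have hPAJt : P * A * Jμᵀ = Jμᵀ := by
    have ht2 : (Jμ * P * A)ᵀ = A * (Pᵀ * Jμᵀ) := by
      simp [hA, Matrix.transpose_mul, Matrix.mul_assoc]
    have := congrArg Matrix.transpose hJPA
    rw [ht2, ← Matrix.mul_assoc, hAPt, Matrix.mul_assoc] at this
    rw [← Matrix.mul_assoc] at this
    exact this
  set M : Matrix (Fin N) (Fin N) ℝ := Jμ * P * Jμᵀ with hM
  -- M is symmetric
  have hMT : Mᵀ = M := by
    have ht3 : Mᵀ = Jμ * Pᵀ * Jμᵀ := by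
      rw [hM]; simp [Matrix.transpose_mul, Matrix.mul_assoc]
    rw [ht3, hM]
    calc Jμ * Pᵀ * Jμᵀ = (Jμ * P * A) * Pᵀ * Jμᵀ := by rw [hJPA]
      _ = Jμ * P * (A * Pᵀ) * Jμᵀ := by rw [Matrix.mul_assoc (Jμ * P)]
      _ = Jμ * P * (P * A) * Jμᵀ := by rw [hAPt]
      _ = Jμ * P * (P * A * Jμᵀ) := by rw [Matrix.mul_assoc (Jμ * P)]
      _ = Jμ * P * Jμᵀ := by rw [hPAJt]
  -- Q₁ * Q₁ᵀ * Jμ = Jμ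
  have hQJ : Q₁ * Q₁ᵀ * Jμ = Jμ := by
    have := congrArg (· * Jμ) hQfull
    simp only [Matrix.add_mul, Matrix.one_mul] at this
    rw [Matrix.mul_assoc Q₂, hQ2Jμ, Matrix.mul_zero, add_zero] at this
    exact this
  -- Q₁ = Jμ * S for some S
  have hcol : ∀ j, ∃ s : Fin nμ → ℝ, Jμ.mulVec s = fun i => Q₁ i j := by
    intro j
    have hmem : (fun i => Q₁ i j) ∈ LinearMap.range Jμ.mulVecLin := by
      rw [← hspan]
      refine ⟨Pi.single j 1, ?_⟩
      ext i
      simp [Matrix.mulVecLin, Matrix.mulVec, dotProduct, Pi.single_apply]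
    obtain ⟨s, hs⟩ := hmem
    exact ⟨s, hs⟩
  choose s hs using hcol
  set S : Matrix (Fin nμ) (Fin rμ) ℝ := Matrix.of (fun i j => s j i) with hS
  have hJS : Jμ * S = Q₁ := by
    ext i j
    have := congrFun (hs j) i
    simp only [Matrix.mulVec, dotProduct] at this
    simp only [Matrix.mul_apply, hS, Matrix.of_apply]
    exact this
  -- M * Q₁ = Q₁
  have hMQ1 : M * Q₁ = Q₁ := by
    rw [hM, ← hJS, ← Matrix.mul_assoc, Matrix.mul_assoc (Jμ * P) Jμᵀ Jμ, ← hA, hJPA, hJS]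
  -- Q₁Q₁ᵀ * M = M
  have hQM : Q₁ * Q₁ᵀ * M = M := by
    rw [hM, ← Matrix.mul_assoc, ← Matrix.mul_assoc, hQJ]
  -- M * (Q₁Q₁ᵀ) = Q₁Q₁ᵀ
  have hMQ : M * (Q₁ * Q₁ᵀ) = Q₁ * Q₁ᵀ := by
    rw [← Matrix.mul_assoc, hMQ1]
  -- M = Q₁Q₁ᵀ
  have hMeq : M = Q₁ * Q₁ᵀ := by
    have := congrArg Matrix.transpose hQM
    rw [Matrix.transpose_mul, hMT, Matrix.transpose_mul, Matrix.transpose_transpose] at this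
    -- this : Mᵀ ... careful
    rw [← this, hMQ]
  -- Finish
  have hQ2Q2 : Q₂ * Q₂ᵀ = 1 - Q₁ * Q₁ᵀ := by
    rw [← hQfull]; abel
  have key : Jκᵀ * Jμ * P * (Jμᵀ * Jκ) = Jκᵀ * (Jμ * P * Jμᵀ) * Jκ := by
    simp only [Matrix.mul_assoc]
  have hr : (Q₂ᵀ * Jκ)ᵀ * (Q₂ᵀ * Jκ) = Jκᵀ * (Q₂ * Q₂ᵀ) * Jκ := by
    rw [Matrix.transpose_mul, Matrix.transpose_transpose]
    simp only [Matrix.mul_assoc]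
  rw [key, ← hM, hMeq, hr, hQ2Q2, Matrix.mul_sub, Matrix.sub_mul, Matrix.mul_one]
end

section
/- Suppose the partitioned Jacobian J = (J_μ J_{κu}) satisfies rank(J_μ) + rank(J_{κu}) = rank(J). Let H = JᵀJ with blocks H_{μμ}, H_{μ,κu}, H_{κu,κu}, and S = H_{κu,κu} − H_{κu,μ}H_{μμ}⁺H_{μ,κu}. Then for b = Jᵀr, the (κ,u)-components of the minimum-norm solution −H⁺b coincide with −S⁺(b_{κu} − H_{κu,μ}H_{μμ}⁺b_μ). -/
/-!
Under the rank condition the column spaces of `Jμ` and `Jku` meet only in `0`. The residual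
`K = Jku - Jμ Hμμ⁺ Jμᵀ Jku`, the part of `Jku` orthogonal to the columns of `Jμ`, has Gram matrix
`KᵀK = S`, so `K S⁺ S = K`; hence `Jku (S⁺ S - 1)` lies in both column spaces and vanishes. This
range condition is what makes the Banachiewicz–Schur block matrix satisfy the four Penrose
conditions for `H`, so by uniqueness it is `H⁺`, and its second block row applied to `b` gives
the claim.
-/

open Matrix

namespace Matrix

variable {R : Type*} [Field R] {m n₁ n₂ : Type*} [Fintype n₁] [Fintype n₂]

theorem range_mulVecLin_fromCols (A : Matrix m n₁ R) (B : Matrix m n₂ R) :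
    LinearMap.range (fromCols A B).mulVecLin =
      LinearMap.range A.mulVecLin ⊔ LinearMap.range B.mulVecLin := by
  have hcol : (fromCols A B).col = Sum.elim A.col B.col := by ext (_ | _) <;> rfl
  rw [range_mulVecLin, range_mulVecLin, range_mulVecLin, hcol, Set.Sum.elim_range,
    Submodule.span_union]

theorem disjoint_range_mulVecLin_of_rank_add_rank_eq [Fintype m]
    {A : Matrix m n₁ R} {B : Matrix m n₂ R} (h : A.rank + B.rank = (fromCols A B).rank) :
    Disjoint (LinearMap.range A.mulVecLin) (LinearMap.range B.mulVecLin) := by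
  have := Submodule.finrank_sup_add_finrank_inf_eq
    (LinearMap.range A.mulVecLin) (LinearMap.range B.mulVecLin)
  rw [rank, rank, rank, range_mulVecLin_fromCols] at h
  rw [disjoint_iff, ← Submodule.finrank_eq_zero]
  omega

theorem mul_eq_zero_of_disjoint_range {k : Type*} [Fintype k]
    {A : Matrix m n₁ R} {B : Matrix m n₂ R}
    (h : Disjoint (LinearMap.range A.mulVecLin) (LinearMap.range B.mulVecLin))
    {X : Matrix n₁ k R} {Y : Matrix n₂ k R} (hXY : A * X = B * Y) : A * X = 0 := by
  classical
  have hA : LinearMap.range (A * X).mulVecLin ≤ LinearMap.range A.mulVecLin := by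
    rw [mulVecLin_mul]; exact LinearMap.range_comp_le_range _ _
  have hB : LinearMap.range (A * X).mulVecLin ≤ LinearMap.range B.mulVecLin := by
    rw [hXY, mulVecLin_mul]; exact LinearMap.range_comp_le_range _ _
  have h0 := LinearMap.range_eq_bot.mp (le_bot_iff.mp (h hA hB))
  rwa [← toLin'_apply', LinearEquiv.map_eq_zero_iff] at h0

end Matrix

namespace IsMoorePenrose

variable {m n : Type*} [Fintype m] [Fintype n]

theorem unique {A : Matrix m n ℝ} {P Q : Matrix n m ℝ}
    (hP : IsMoorePenrose A P) (hQ : IsMoorePenrose A Q) : P = Q := by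
  obtain ⟨hP₁, hP₂, hP₃, hP₄⟩ := hP
  obtain ⟨hQ₁, hQ₂, hQ₃, hQ₄⟩ := hQ
  have hAP : A * P = A * Q := by
    calc A * P = (A * Q * A * P)ᵀ := by rw [hQ₁, hP₃]
    _ = (A * P)ᵀ * (A * Q)ᵀ := by rw [Matrix.mul_assoc (A * Q), transpose_mul]
    _ = A * Q := by rw [hP₃, hQ₃, ← Matrix.mul_assoc, hP₁]
  have hPA : P * A = Q * A := by
    calc P * A = (P * A * Q * A)ᵀ := by
          rw [Matrix.mul_assoc, Matrix.mul_assoc, ← Matrix.mul_assoc A, hQ₁, hP₄]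
    _ = (Q * A)ᵀ * (P * A)ᵀ := by rw [Matrix.mul_assoc (P * A), transpose_mul]
    _ = Q * A := by rw [hQ₄, hP₄, Matrix.mul_assoc, ← Matrix.mul_assoc A, hP₁]
  rw [← hP₂, hPA, Matrix.mul_assoc, hAP, ← Matrix.mul_assoc, hQ₂]

theorem transpose {A : Matrix m n ℝ} {P : Matrix n m ℝ} (h : IsMoorePenrose A P) :
    IsMoorePenrose Aᵀ Pᵀ := by
  obtain ⟨h₁, h₂, h₃, h₄⟩ := h
  refine ⟨?_, ?_, ?_, ?_⟩
  · rw [← transpose_mul, ← transpose_mul, ← Matrix.mul_assoc, h₁]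
  · rw [← transpose_mul, ← transpose_mul, ← Matrix.mul_assoc, h₂]
  · rw [← transpose_mul, transpose_transpose, h₄]
  · rw [← transpose_mul, transpose_transpose, h₃]

theorem isSymm {A P : Matrix n n ℝ} (h : IsMoorePenrose A P) (hA : A.IsSymm) : P.IsSymm :=
  (hA.eq ▸ h.transpose).unique h

variable {J : Matrix m n ℝ} {P : Matrix n n ℝ}

theorem mul_mul_transpose_mul_self (h : IsMoorePenrose (Jᵀ * J) P) : J * P * (Jᵀ * J) = J := by
  classical
  set E := P * (Jᵀ * J) - 1
  have hJE : Jᵀ * J * E = 0 := by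
    rw [Matrix.mul_sub, Matrix.mul_one, ← Matrix.mul_assoc, h.1, sub_self]
  have hD : (J * E)ᴴ * (J * E) = 0 := by
    rw [conjTranspose_eq_transpose_of_trivial, transpose_mul, Matrix.mul_assoc,
      ← Matrix.mul_assoc Jᵀ, hJE, Matrix.mul_zero]
  rw [conjTranspose_mul_self_eq_zero, Matrix.mul_sub, Matrix.mul_one, sub_eq_zero] at hD
  rwa [Matrix.mul_assoc]

theorem transpose_mul_self_mul_mul_transpose (h : IsMoorePenrose (Jᵀ * J) P) :
    Jᵀ * J * P * Jᵀ = Jᵀ := by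
  have hP : P.IsSymm := h.isSymm (by simp [IsSymm, transpose_mul])
  simpa only [transpose_mul, transpose_transpose, hP.eq, Matrix.mul_assoc]
    using congrArg Matrix.transpose h.mul_mul_transpose_mul_self

end IsMoorePenrose

section BanachiewiczSchur

variable {m n : Type*} [Fintype m] [Fintype n]

def banachiewiczSchur (P : Matrix m m ℝ) (B : Matrix m n ℝ) (Q : Matrix n n ℝ) :
    Matrix (m ⊕ n) (m ⊕ n) ℝ :=
  fromBlocks (P + P * B * Q * Bᵀ * P) (-(P * B * Q)) (-(Q * Bᵀ * P)) Q

variable {A P : Matrix m m ℝ} {B : Matrix m n ℝ} {S Q : Matrix n n ℝ}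

theorem fromBlocks_mul_banachiewiczSchur (hB : A * P * B = B) (hB' : S * Q * Bᵀ = Bᵀ) :
    fromBlocks A B Bᵀ (S + Bᵀ * P * B) * banachiewiczSchur P B Q =
      fromBlocks (A * P) 0 0 (S * Q) := by
  rw [banachiewiczSchur, fromBlocks_multiply]
  congr 1 <;> simp only [Matrix.mul_add, Matrix.add_mul, Matrix.mul_neg, ← Matrix.mul_assoc,
    hB, hB'] <;> abel

theorem isSymm_banachiewiczSchur (hP : P.IsSymm) (hQ : Q.IsSymm) :
    (banachiewiczSchur P B Q).IsSymm := by
  refine IsSymm.fromBlocks ?_ ?_ hQ <;>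
    simp only [IsSymm, transpose_add, transpose_neg, transpose_mul, transpose_transpose,
      hP.eq, hQ.eq, Matrix.mul_assoc]

theorem banachiewiczSchur_mulVec_inr (v : m ⊕ n → ℝ) (j : n) :
    (banachiewiczSchur P B Q *ᵥ v) (Sum.inr j) =
      (Q *ᵥ (v ∘ Sum.inr - Bᵀ *ᵥ (P *ᵥ (v ∘ Sum.inl)))) j := by
  simp only [banachiewiczSchur, fromBlocks_mulVec, Sum.elim_inr, mulVec_sub, neg_mulVec,
    mulVec_mulVec, Matrix.mul_assoc, neg_add_eq_sub]

theorem IsMoorePenrose.fromBlocks_banachiewiczSchur (hA : A.IsSymm) (hS : S.IsSymm)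
    (hP : IsMoorePenrose A P) (hQ : IsMoorePenrose S Q)
    (hB : A * P * B = B) (hB' : S * Q * Bᵀ = Bᵀ) :
    IsMoorePenrose (fromBlocks A B Bᵀ (S + Bᵀ * P * B)) (banachiewiczSchur P B Q) := by
  have hD : (fromBlocks (A * P) 0 0 (S * Q)).IsSymm :=
    IsSymm.fromBlocks hP.2.2.1 transpose_zero hQ.2.2.1
  have hH : (fromBlocks A B Bᵀ (S + Bᵀ * P * B)).IsSymm :=
    IsSymm.fromBlocks hA rfl
      (hS.add (by simp [IsSymm, transpose_mul, (hP.isSymm hA).eq, Matrix.mul_assoc]))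
  have hM := isSymm_banachiewiczSchur (B := B) (hP.isSymm hA) (hQ.isSymm hS)
  have hHM := fromBlocks_mul_banachiewiczSchur (Q := Q) hB hB'
  have hMH : banachiewiczSchur P B Q * fromBlocks A B Bᵀ (S + Bᵀ * P * B) =
      fromBlocks (A * P) 0 0 (S * Q) := by
    rw [← hM.eq, ← hH.eq, ← transpose_mul, hHM, hD.eq]
  have hPAP : P * (A * P) = P := by rw [← Matrix.mul_assoc, hP.2.1]
  have hQSQ : Q * (S * Q) = Q := by rw [← Matrix.mul_assoc, hQ.2.1]
  refine ⟨?_, ?_, hHM ▸ hD, hMH ▸ hD⟩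
  · rw [hHM, fromBlocks_multiply]
    simp only [Matrix.zero_mul, add_zero, zero_add, Matrix.mul_add, ← Matrix.mul_assoc,
      hP.1, hQ.1, hB, hB']
  · rw [Matrix.mul_assoc, hHM, banachiewiczSchur, fromBlocks_multiply]
    simp only [Matrix.mul_zero, add_zero, zero_add, Matrix.add_mul, Matrix.neg_mul,
      Matrix.mul_assoc, hPAP, hQSQ]

end BanachiewiczSchur

section SchurComplement

variable {m n₁ n₂ : Type*} [Fintype m] [Fintype n₁]
  {J₁ : Matrix m n₁ ℝ} {J₂ : Matrix m n₂ ℝ} {P₁ : Matrix n₁ n₁ ℝ}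

theorem IsMoorePenrose.schur_eq_transpose_mul_self (hP₁ : IsMoorePenrose (J₁ᵀ * J₁) P₁) :
    J₂ᵀ * J₂ - J₂ᵀ * J₁ * P₁ * (J₁ᵀ * J₂) =
      (J₂ - J₁ * P₁ * J₁ᵀ * J₂)ᵀ * (J₂ - J₁ * P₁ * J₁ᵀ * J₂) := by
  have hP : P₁.IsSymm := hP₁.isSymm (by simp [IsSymm, transpose_mul])
  have hJ : J₂ᵀ * J₁ * P₁ * J₁ᵀ * J₁ = J₂ᵀ * J₁ := by
    have := hP₁.mul_mul_transpose_mul_self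
    simp only [Matrix.mul_assoc] at this ⊢
    rw [this]
  simp only [transpose_sub, transpose_mul, transpose_transpose, hP.eq, Matrix.sub_mul,
    Matrix.mul_sub, ← Matrix.mul_assoc, hJ, sub_self, Matrix.zero_mul, sub_zero]

theorem IsMoorePenrose.mul_mul_schur_of_rank_add_rank_eq [Fintype n₂]
    (hrank : J₁.rank + J₂.rank = (fromCols J₁ J₂).rank) (hP₁ : IsMoorePenrose (J₁ᵀ * J₁) P₁)
    {Q : Matrix n₂ n₂ ℝ} (hQ : IsMoorePenrose (J₂ᵀ * J₂ - J₂ᵀ * J₁ * P₁ * (J₁ᵀ * J₂)) Q) :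
    J₂ * Q * (J₂ᵀ * J₂ - J₂ᵀ * J₁ * P₁ * (J₁ᵀ * J₂)) = J₂ := by
  classical
  rw [hP₁.schur_eq_transpose_mul_self] at hQ ⊢
  have hK := hQ.mul_mul_transpose_mul_self
  set S := (J₂ - J₁ * P₁ * J₁ᵀ * J₂)ᵀ * (J₂ - J₁ * P₁ * J₁ᵀ * J₂)
  have h : J₂ * (Q * S - 1) = J₁ * (P₁ * J₁ᵀ * J₂ * (Q * S - 1)) := by
    simp only [Matrix.mul_sub, Matrix.mul_one, Matrix.sub_mul, ← Matrix.mul_assoc] at hK ⊢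
    rw [sub_eq_sub_iff_sub_eq_sub]
    exact hK
  have h0 := mul_eq_zero_of_disjoint_range
    (disjoint_range_mulVecLin_of_rank_add_rank_eq hrank).symm h
  rwa [Matrix.mul_sub, Matrix.mul_one, sub_eq_zero, ← Matrix.mul_assoc] at h0

end SchurComplement

theorem stmt_7 {N nμ nku : ℕ}
    (Jμ : Matrix (Fin N) (Fin nμ) ℝ) (Jku : Matrix (Fin N) (Fin nku) ℝ)
    (r : Fin N → ℝ)
    -- rank condition: rank(Jμ) + rank(Jku) = rank(J)
    (hrank : Jμ.rank + Jku.rank = (fromCols Jμ Jku).rank)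
    -- H⁺, the Moore–Penrose pseudo-inverse of H = JᵀJ
    (Hp : Matrix (Fin nμ ⊕ Fin nku) (Fin nμ ⊕ Fin nku) ℝ)
    (hHp : IsMoorePenrose ((fromCols Jμ Jku)ᵀ * fromCols Jμ Jku) Hp)
    -- H_{μμ}⁺, the Moore–Penrose pseudo-inverse of H_{μμ} = JμᵀJμ
    (Pμ : Matrix (Fin nμ) (Fin nμ) ℝ) (hPμ : IsMoorePenrose (Jμᵀ * Jμ) Pμ)
    -- S⁺, the Moore–Penrose pseudo-inverse of the generalized Schur complement S
    (PS : Matrix (Fin nku) (Fin nku) ℝ)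
    (hPS : IsMoorePenrose (Jkuᵀ * Jku - Jkuᵀ * Jμ * Pμ * (Jμᵀ * Jku)) PS) :
    ∀ j, (-(Hp *ᵥ ((fromCols Jμ Jku)ᵀ *ᵥ r))) (Sum.inr j) =
      (-(PS *ᵥ (Jkuᵀ *ᵥ r - (Jkuᵀ * Jμ) *ᵥ (Pμ *ᵥ (Jμᵀ *ᵥ r))))) j := by
  intro j
  have hS : (Jkuᵀ * Jku - Jkuᵀ * Jμ * Pμ * (Jμᵀ * Jku)).IsSymm := by
    rw [IsSymm, hPμ.schur_eq_transpose_mul_self, transpose_mul, transpose_transpose]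
  set S := Jkuᵀ * Jku - Jkuᵀ * Jμ * Pμ * (Jμᵀ * Jku)
  have hBt : (Jμᵀ * Jku)ᵀ = Jkuᵀ * Jμ := by rw [transpose_mul, transpose_transpose]
  have hSB : S * PS * (Jμᵀ * Jku)ᵀ = (Jμᵀ * Jku)ᵀ := by
    have h := congrArg transpose (hPμ.mul_mul_schur_of_rank_add_rank_eq hrank hPS)
    rw [transpose_mul, transpose_mul, hS.eq, (hPS.isSymm hS).eq, ← Matrix.mul_assoc] at h
    rw [hBt, ← Matrix.mul_assoc, h]
  have hAB : Jμᵀ * Jμ * Pμ * (Jμᵀ * Jku) = Jμᵀ * Jku := by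
    rw [← Matrix.mul_assoc, hPμ.transpose_mul_self_mul_mul_transpose]
  have hH : (fromCols Jμ Jku)ᵀ * fromCols Jμ Jku =
      fromBlocks (Jμᵀ * Jμ) (Jμᵀ * Jku) (Jμᵀ * Jku)ᵀ (S + (Jμᵀ * Jku)ᵀ * Pμ * (Jμᵀ * Jku)) := by
    rw [transpose_fromCols, fromRows_mul_fromCols, hBt, sub_add_cancel]
  rw [hH] at hHp
  have hJμ : (Jμᵀ * Jμ).IsSymm := by rw [IsSymm, transpose_mul, transpose_transpose]
  rw [hHp.unique (hPμ.fromBlocks_banachiewiczSchur hJμ hS hPS hAB hSB), Pi.neg_apply,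
    banachiewiczSchur_mulVec_inr, hBt]
  simp [transpose_fromCols]
end

section
/- Given the generalized Schur complement S = H_{κκ} − H_{κμ}H_{μμ}⁺H_{μκ} of H = JᵀJ (J = (J_μ J_κ)), S is symmetric positive semi-definite and rank(S) = rank(Q₂ᵀJ_κ), where Q₂ has orthonormal columns spanning the orthogonal complement of col(J_μ) in ℝ^N. -/
open Matrix

private lemma mp_unique {n : ℕ} {A P Q : Matrix (Fin n) (Fin n) ℝ}
    (hP : IsMoorePenrose A P) (hQ : IsMoorePenrose A Q) : P = Q := by
  obtain ⟨hP1, hP2, hP3, hP4⟩ := hP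
  obtain ⟨hQ1, hQ2, hQ3, hQ4⟩ := hQ
  have hAP : A * P = A * Q := by
    have h1 : A * P * (A * Q) = A * Q := by
      rw [show A * P * (A * Q) = A * P * A * Q by simp only [Matrix.mul_assoc], hP1]
    have h2 : A * P * (A * Q) = A * P := by
      calc A * P * (A * Q) = (A * P)ᵀ * (A * Q)ᵀ := by rw [hP3, hQ3]
        _ = (A * Q * (A * P))ᵀ := by rw [← transpose_mul]
        _ = (A * Q * A * P)ᵀ := by simp only [Matrix.mul_assoc]
        _ = (A * P)ᵀ := by rw [hQ1]
        _ = A * P := hP3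
    rw [← h2, h1]
  have hPA : P * A = Q * A := by
    have h1 : (Q * A) * (P * A) = Q * A := by
      rw [show (Q * A) * (P * A) = Q * (A * P * A) by simp only [Matrix.mul_assoc], hP1]
    have h2 : (Q * A) * (P * A) = P * A := by
      calc (Q * A) * (P * A) = (Q * A)ᵀ * (P * A)ᵀ := by rw [hQ4, hP4]
        _ = (P * A * (Q * A))ᵀ := by rw [← transpose_mul]
        _ = (P * (A * Q * A))ᵀ := by simp only [Matrix.mul_assoc]
        _ = (P * A)ᵀ := by rw [hQ1]
        _ = P * A := hP4
    rw [← h2, h1]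
  calc P = P * A * P := hP2.symm
    _ = Q * A * P := by rw [hPA]
    _ = Q * (A * P) := by rw [Matrix.mul_assoc]
    _ = Q * (A * Q) := by rw [hAP]
    _ = Q * A * Q := by rw [Matrix.mul_assoc]
    _ = Q := hQ2

private lemma ext_of_mulVec {k l : ℕ} {A B : Matrix (Fin k) (Fin l) ℝ}
    (h : ∀ v, A *ᵥ v = B *ᵥ v) : A = B := by
  ext i j
  simpa [Matrix.mulVec_single] using congrFun (h (Pi.single j 1)) i

theorem stmt_19 {N nμ nκ m : ℕ}
    (Jμ : Matrix (Fin N) (Fin nμ) ℝ) (Jκ : Matrix (Fin N) (Fin nκ) ℝ)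
    -- H_{μμ}⁺, the Moore–Penrose pseudo-inverse of JμᵀJμ
    (P : Matrix (Fin nμ) (Fin nμ) ℝ) (hP : IsMoorePenrose (Jμᵀ * Jμ) P)
    -- Q₂ has orthonormal columns spanning the orthogonal complement of col(Jμ)
    (Q₂ : Matrix (Fin N) (Fin m) ℝ) (hQ2 : Q₂ᵀ * Q₂ = 1)
    (hcompl : ∀ x : Fin N → ℝ,
      x ∈ LinearMap.range Q₂.mulVecLin ↔
        ∀ y ∈ LinearMap.range Jμ.mulVecLin, x ⬝ᵥ y = 0)
    (S : Matrix (Fin nκ) (Fin nκ) ℝ)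
    (hS : S = Jκᵀ * Jκ - Jκᵀ * Jμ * P * (Jμᵀ * Jκ)) :
    S.PosSemidef ∧ S.rank = (Q₂ᵀ * Jκ).rank := by
  set A : Matrix (Fin nμ) (Fin nμ) ℝ := Jμᵀ * Jμ with hA
  clear_value A
  obtain ⟨hP1, hP2, hP3, hP4⟩ := hP
  have hAT : Aᵀ = A := by rw [hA, transpose_mul, transpose_transpose]
  -- P is symmetric
  have hPT : Pᵀ = P := by
    refine mp_unique ?_ ⟨hP1, hP2, hP3, hP4⟩
    refine ⟨?_, ?_, ?_, ?_⟩
    · calc A * Pᵀ * A = (Aᵀ * P * Aᵀ)ᵀ := by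
            simp only [transpose_mul, transpose_transpose, Matrix.mul_assoc]
      _ = A := by rw [hAT, hP1, hAT]
    · calc Pᵀ * A * Pᵀ = (P * Aᵀ * P)ᵀ := by
            simp only [transpose_mul, transpose_transpose, Matrix.mul_assoc]
      _ = Pᵀ := by rw [hAT, hP2]
    · calc (A * Pᵀ)ᵀ = P * Aᵀ := by rw [transpose_mul, transpose_transpose]
      _ = P * A := by rw [hAT]
      _ = (P * A)ᵀ := hP4.symm
      _ = Aᵀ * Pᵀ := by rw [transpose_mul]
      _ = A * Pᵀ := by rw [hAT]
    · calc (Pᵀ * A)ᵀ = Aᵀ * P := by rw [transpose_mul, transpose_transpose]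
      _ = A * P := by rw [hAT]
      _ = (A * P)ᵀ := hP3.symm
      _ = Pᵀ * Aᵀ := by rw [transpose_mul]
      _ = Pᵀ * A := by rw [hAT]
  -- Jμ * P * A = Jμ
  have hstar : Jμ * P * A = Jμ := by
    have hT : (Jμ * P * A)ᵀ = A * P * Jμᵀ := by
      rw [transpose_mul, transpose_mul, hPT, hAT, Matrix.mul_assoc]
    have c1 : Jμᵀ * (Jμ * P * A) = A := by
      rw [show Jμᵀ * (Jμ * P * A) = Jμᵀ * Jμ * P * A by simp only [Matrix.mul_assoc],
        ← hA, hP1]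
    have c2 : A * P * Jμᵀ * Jμ = A := by
      rw [Matrix.mul_assoc (A * P), ← hA, hP1]
    have c3 : A * P * Jμᵀ * (Jμ * P * A) = A := by
      rw [show A * P * Jμᵀ * (Jμ * P * A) = A * P * (Jμᵀ * Jμ * P * A) by
        simp only [Matrix.mul_assoc], ← hA, hP1, hP1]
    have key : (Jμ - Jμ * P * A)ᵀ * (Jμ - Jμ * P * A) = 0 := by
      rw [transpose_sub, Matrix.sub_mul, Matrix.mul_sub, Matrix.mul_sub, hT,
        c1, c2, c3, ← hA]
      simp
    have h0 := (Matrix.conjTranspose_mul_self_eq_zero (A := Jμ - Jμ * P * A)).mp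
      (by rwa [conjTranspose_eq_transpose_of_trivial])
    exact (sub_eq_zero.mp h0).symm
  set B : Matrix (Fin N) (Fin N) ℝ := Jμ * P * Jμᵀ with hB
  clear_value B
  have hBJ : B * Jμ = Jμ := by
    rw [hB, Matrix.mul_assoc (Jμ * P), ← hA]; exact hstar
  have hBsymm : Bᵀ = B := by
    rw [hB, transpose_mul, transpose_mul, transpose_transpose, hPT, Matrix.mul_assoc]
  -- Jμᵀ * Q₂ = 0
  have hJQ : Jμᵀ * Q₂ = 0 := by
    ext i j
    have hx : Q₂ *ᵥ Pi.single j 1 ∈ LinearMap.range Q₂.mulVecLin :=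
      ⟨Pi.single j 1, rfl⟩
    have := (hcompl _).mp hx (Jμ *ᵥ Pi.single i 1) ⟨Pi.single i 1, rfl⟩
    simpa [Matrix.mulVec_single, dotProduct, Matrix.mul_apply, mul_comm] using this
  set C : Matrix (Fin N) (Fin N) ℝ := Q₂ * Q₂ᵀ with hC
  clear_value C
  have hC1B : C * (1 - B) = 1 - B := by
    apply ext_of_mulVec
    intro v
    have hxmem : (1 - B) *ᵥ v ∈ LinearMap.range Q₂.mulVecLin := by
      rw [hcompl]
      rintro y ⟨w, rfl⟩
      have hperp : Jμᵀ * (1 - B) = 0 := by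
        have h1 : (1 - B) * Jμ = 0 := by rw [Matrix.sub_mul, Matrix.one_mul, hBJ, sub_self]
        have h2 := congrArg Matrix.transpose h1
        simpa [transpose_mul, transpose_sub, hBsymm] using h2
      calc ((1 - B) *ᵥ v) ⬝ᵥ (Jμ.mulVecLin w)
          = (((1 - B) *ᵥ v) ᵥ* Jμ) ⬝ᵥ w := by
            rw [Matrix.mulVecLin_apply, dotProduct_mulVec]
        _ = (Jμᵀ *ᵥ ((1 - B) *ᵥ v)) ⬝ᵥ w := by rw [Matrix.mulVec_transpose]
        _ = 0 := by rw [Matrix.mulVec_mulVec, hperp, Matrix.zero_mulVec, zero_dotProduct]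
    obtain ⟨z, hz⟩ := hxmem
    rw [Matrix.mulVecLin_apply] at hz
    calc (C * (1 - B)) *ᵥ v = C *ᵥ ((1 - B) *ᵥ v) := by rw [← Matrix.mulVec_mulVec]
      _ = C *ᵥ (Q₂ *ᵥ z) := by rw [hz]
      _ = (Q₂ * (Q₂ᵀ * Q₂)) *ᵥ z := by
          rw [Matrix.mulVec_mulVec, hC, Matrix.mul_assoc]
      _ = Q₂ *ᵥ z := by rw [hQ2, Matrix.mul_one]
      _ = (1 - B) *ᵥ v := hz
  have hBC : B * C = 0 := by
    rw [hB, hC]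
    rw [show Jμ * P * Jμᵀ * (Q₂ * Q₂ᵀ) = Jμ * P * (Jμᵀ * Q₂ * Q₂ᵀ) by
      simp only [Matrix.mul_assoc], hJQ, Matrix.zero_mul, Matrix.mul_zero]
  have hCB : C * B = 0 := by
    have h2 := congrArg Matrix.transpose hBC
    have hCT : Cᵀ = C := by rw [hC, transpose_mul, transpose_transpose]
    simpa [transpose_mul, hBsymm, hCT] using h2
  have hCeq : C = 1 - B := by
    have h3 : C * (1 - B) = C - C * B := by rw [Matrix.mul_sub, Matrix.mul_one]
    rw [h3, hCB, sub_zero] at hC1B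
    exact hC1B
  have hSform : S = (Q₂ᵀ * Jκ)ᵀ * (Q₂ᵀ * Jκ) := by
    rw [hS, transpose_mul, transpose_transpose]
    calc Jκᵀ * Jκ - Jκᵀ * Jμ * P * (Jμᵀ * Jκ) = Jκᵀ * Jκ - Jκᵀ * (B * Jκ) := by
          rw [hB]; simp only [Matrix.mul_assoc]
      _ = Jκᵀ * ((1 - B) * Jκ) := by
          rw [Matrix.sub_mul, Matrix.one_mul, Matrix.mul_sub]
      _ = Jκᵀ * (C * Jκ) := by rw [hCeq]
      _ = Jκᵀ * Q₂ * (Q₂ᵀ * Jκ) := by rw [hC]; simp only [Matrix.mul_assoc]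
  constructor
  · rw [hSform]
    have h4 := Matrix.posSemidef_conjTranspose_mul_self (Q₂ᵀ * Jκ)
    rwa [conjTranspose_eq_transpose_of_trivial] at h4
  · rw [hSform, Matrix.rank_transpose_mul_self]
end
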